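/- Fix d ∈ ℕ with d ≥ 1 and δ ∈ (0,1). Let M be a random d×d real matrix on a probability space that is almost surely symmetric positive semidefinite with integrable entries, and let V ∈ ℝ^{d×d} be a deterministic symmetric positive definite matrix such that E[M] ⪯ V in the Loewner order. Then the probability that M ⪯ (d/δ)·V fails is at most δ; that is, P[ ¬( M ⪯ (d/δ) V ) ] ≤ δ. -/

import Mathlib

open MeasureTheory Matrix

open scoped MatrixOrder in
lemma psdm_sqrt_exists {d : ℕ} {A : Matrix (Fin d) (Fin d) ℝ} (hA : A.PosSemidef) :
    ∃ S : Matrix (Fin d) (Fin d) ℝ, S.PosSemidef ∧ Sᴴ = S ∧ S * S = A :=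
  ⟨CFC.sqrt A, (CFC.sqrt_nonneg A).posSemidef, (CFC.sqrt_nonneg A).posSemidef.1,
    CFC.sqrt_mul_sqrt_self A hA.nonneg⟩

lemma psdm_diag_nonneg {d : ℕ} {A : Matrix (Fin d) (Fin d) ℝ} (hA : A.PosSemidef) (i : Fin d) :
    0 ≤ A i i := by
  have := hA.dotProduct_mulVec_nonneg (Pi.single i 1)
  simpa [dotProduct, mulVec, Pi.single_apply, mul_ite, ite_mul, star_trivial] using this

lemma psdm_trace_nonneg {d : ℕ} {A : Matrix (Fin d) (Fin d) ℝ} (hA : A.PosSemidef) :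
    0 ≤ A.trace := by
  exact Finset.sum_nonneg fun i _ => psdm_diag_nonneg hA i

lemma psdm_trace_mul_nonneg {d : ℕ} {A B : Matrix (Fin d) (Fin d) ℝ}
    (hA : A.PosSemidef) (hB : B.PosSemidef) : 0 ≤ (A * B).trace := by
  obtain ⟨S, hSps, hSher, hSS⟩ : ∃ S : Matrix (Fin d) (Fin d) ℝ,
      S.PosSemidef ∧ Sᴴ = S ∧ S * S = A :=
    psdm_sqrt_exists hA
  have h1 : (A * B).trace = (S * B * Sᴴ).trace := by
    rw [hSher, ← hSS, Matrix.mul_assoc, Matrix.trace_mul_comm, Matrix.mul_assoc]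
  rw [h1]
  exact psdm_trace_nonneg (hB.mul_mul_conjTranspose_same _)

lemma psdm_quad_le_trace {d : ℕ} {B : Matrix (Fin d) (Fin d) ℝ} (hB : B.PosSemidef)
    (x : Fin d → ℝ) : x ⬝ᵥ B *ᵥ x ≤ B.trace * (x ⬝ᵥ x) := by
  obtain ⟨S, hSps', hSher', hBS'⟩ := psdm_sqrt_exists hB
  have hSher : S.IsHermitian := hSps'.1
  have hST : Sᵀ = S := by
    rw [← conjTranspose_eq_transpose_of_trivial]; exact hSher
  have hsym : ∀ i j, S j i = S i j := fun i j => by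
    simpa using hSher.apply i j
  have hBS : S * S = B := hBS'
  have h1 : x ⬝ᵥ B *ᵥ x = (S *ᵥ x) ⬝ᵥ (S *ᵥ x) := by
    rw [← hBS, ← mulVec_mulVec, dotProduct_mulVec, ← mulVec_transpose, hST]
  have h2 : (S *ᵥ x) ⬝ᵥ (S *ᵥ x) = ∑ i, (∑ j, S i j * x j) ^ 2 := by
    simp [dotProduct, mulVec, sq]
  have h3 : B.trace = ∑ i, ∑ j, S i j ^ 2 := by
    rw [← hBS]
    simp only [Matrix.trace, Matrix.diag, Matrix.mul_apply]
    refine Finset.sum_congr rfl fun i _ => Finset.sum_congr rfl fun j _ => ?_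
    rw [hsym i j, sq]
  rw [h1, h2, h3, Finset.sum_mul]
  refine Finset.sum_le_sum fun i _ => ?_
  have := Finset.sum_mul_sq_le_sq_mul_sq Finset.univ (fun j => S i j) x
  simpa [dotProduct, sq] using this


lemma psdm_key {d : ℕ} {V A : Matrix (Fin d) (Fin d) ℝ} (hV : V.PosDef) (hA : A.PosSemidef)
    {c : ℝ} (htr : (V⁻¹ * A).trace ≤ c) : (c • V - A).PosSemidef := by
  have hVi : (V⁻¹).PosDef := hV.inv
  obtain ⟨S, hSps, hSher, hSS⟩ : ∃ S : Matrix (Fin d) (Fin d) ℝ,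
      S.PosSemidef ∧ Sᴴ = S ∧ S * S = V⁻¹ :=
    psdm_sqrt_exists hVi.posSemidef
  have hdetV : IsUnit V.det := hV.det_pos.ne'.isUnit
  have hdetS : IsUnit S.det := by
    rw [isUnit_iff_ne_zero]
    intro h0
    have h2 : S.det * S.det = (V⁻¹).det := by rw [← det_mul, hSS]
    exact hVi.det_pos.ne' (by rw [← h2, h0, zero_mul])
  have hS1 : S⁻¹ * S = 1 := nonsing_inv_mul S hdetS
  have hS2 : S * S⁻¹ = 1 := mul_nonsing_inv S hdetS
  have hVinv : S⁻¹ * S⁻¹ = V := by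
    rw [← Matrix.mul_inv_rev, hSS, Matrix.nonsing_inv_nonsing_inv V hdetV]
  -- B := S * A * S is PSD with trace = trace (V⁻¹ * A)
  have hBps : (S * A * S).PosSemidef := by
    have := hA.mul_mul_conjTranspose_same S
    rwa [hSher] at this
  have hBtr : (S * A * S).trace = (V⁻¹ * A).trace := by
    rw [Matrix.trace_mul_cycle, hSS]
  -- c • 1 - S * A * S is PSD
  have hmid : ((c • (1 : Matrix (Fin d) (Fin d) ℝ)) - S * A * S).PosSemidef := by
    refine PosSemidef.of_dotProduct_mulVec_nonneg ?_ ?_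
    · show (c • (1 : Matrix (Fin d) (Fin d) ℝ) - S * A * S)ᴴ = _
      rw [conjTranspose_sub, conjTranspose_smul, conjTranspose_one, hBps.1, star_trivial]
    · intro x
      have hq := psdm_quad_le_trace hBps x
      have hxx : 0 ≤ x ⬝ᵥ x := Finset.sum_nonneg fun i _ => mul_self_nonneg _
      have htr' : (S * A * S).trace ≤ c := by rw [hBtr]; exact htr
      have : x ⬝ᵥ ((c • (1 : Matrix (Fin d) (Fin d) ℝ) - S * A * S) *ᵥ x)
          = c * (x ⬝ᵥ x) - x ⬝ᵥ ((S * A * S) *ᵥ x) := by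
        rw [Matrix.sub_mulVec, dotProduct_sub, Matrix.smul_mulVec,
          Matrix.one_mulVec, dotProduct_smul]
        simp [smul_eq_mul]
      rw [star_trivial, this]
      nlinarith [mul_le_mul_of_nonneg_left htr' hxx]
  have hkey : S⁻¹ * ((c • (1 : Matrix (Fin d) (Fin d) ℝ)) - S * A * S) * (S⁻¹)ᴴ
      = c • V - A := by
    have hSinvH : (S⁻¹)ᴴ = S⁻¹ := by rw [Matrix.conjTranspose_nonsing_inv, hSher]
    rw [hSinvH, Matrix.mul_sub, Matrix.sub_mul]
    congr 1
    · rw [Matrix.mul_smul, Matrix.mul_one, Matrix.smul_mul, hVinv]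
    · calc S⁻¹ * (S * A * S) * S⁻¹ = (S⁻¹ * S) * A * (S * S⁻¹) := by
            simp only [Matrix.mul_assoc]
        _ = A := by rw [hS1, hS2, Matrix.one_mul, Matrix.mul_one]
  rw [← hkey]
  exact hmid.mul_mul_conjTranspose_same _


/-- Markov-type bound for random positive semidefinite matrices: if `M` is almost surely
symmetric positive semidefinite with integrable entries, `V ≻ 0` is deterministic, and
`E[M] ⪯ V` in the Loewner order, then `M ⪯ (d/δ)·V` fails with probability at most `δ`. -/
theorem psd_matrix_markov
    {Ω : Type} [MeasurableSpace Ω] (μ : Measure Ω) [IsProbabilityMeasure μ]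
    (d : ℕ) (hd : 1 ≤ d) (δ : ℝ) (hδ : δ ∈ Set.Ioo (0 : ℝ) 1)
    (M : Ω → Matrix (Fin d) (Fin d) ℝ)
    (hint : ∀ i j, Integrable (fun ω => M ω i j) μ)
    (hpsd : ∀ᵐ ω ∂μ, (M ω).PosSemidef)
    (V : Matrix (Fin d) (Fin d) ℝ) (hV : V.PosDef)
    (hEV : (V - Matrix.of fun i j => ∫ ω, M ω i j ∂μ).PosSemidef) :
    μ {ω | ¬ ((((d : ℝ) / δ) • V - M ω).PosSemidef)} ≤ ENNReal.ofReal δ := by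
  obtain ⟨hδ0, hδ1⟩ := hδ
  set c : ℝ := (d : ℝ) / δ with hc
  have hd0 : (0 : ℝ) < d := by exact_mod_cast hd
  have hc0 : 0 < c := div_pos hd0 hδ0
  set f : Ω → ℝ := fun ω => ∑ i, ∑ j, V⁻¹ i j * M ω j i with hf
  have hfeq : ∀ ω, f ω = (V⁻¹ * M ω).trace := by
    intro ω
    simp [hf, Matrix.trace, Matrix.diag, Matrix.mul_apply]
  have hfint : Integrable f μ :=
    integrable_finset_sum _ fun i _ =>
      integrable_finset_sum _ fun j _ => (hint j i).const_mul _
  have hVips : (V⁻¹).PosSemidef := hV.inv.posSemidef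
  have hfnn : 0 ≤ᵐ[μ] f := by
    filter_upwards [hpsd] with ω hω
    rw [Pi.zero_apply, hfeq ω]
    exact psdm_trace_mul_nonneg hVips hω
  -- expected value
  set EM : Matrix (Fin d) (Fin d) ℝ := Matrix.of fun i j => ∫ ω, M ω i j ∂μ with hEM
  have hEint : ∫ ω, f ω ∂μ = (V⁻¹ * EM).trace := by
    simp only [hf]
    rw [integral_finset_sum _ fun i _ =>
      integrable_finset_sum _ fun j _ => (hint j i).const_mul (V⁻¹ i j)]
    refine Finset.sum_congr rfl fun i _ => ?_
    rw [integral_finset_sum _ fun j _ => (hint j i).const_mul _]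
    simp [Matrix.trace, Matrix.diag, Matrix.mul_apply, hEM, integral_const_mul]
  have hEd : (V⁻¹ * EM).trace ≤ d := by
    have h1 : 0 ≤ (V⁻¹ * (V - EM)).trace := psdm_trace_mul_nonneg hVips hEV
    have h2 : V⁻¹ * (V - EM) = 1 - V⁻¹ * EM := by
      rw [Matrix.mul_sub, Matrix.nonsing_inv_mul V hV.det_pos.ne'.isUnit]
    rw [h2, Matrix.trace_sub, Matrix.trace_one] at h1
    simpa using sub_nonneg.mp h1
  -- Markov
  have hmarkov := mul_meas_ge_le_integral_of_nonneg hfnn hfint c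
  have hEf : ∫ ω, f ω ∂μ ≤ d := by rw [hEint]; exact hEd
  have hsub : {ω | ¬ ((c • V - M ω).PosSemidef)} ≤ᵐ[μ] {ω | c ≤ f ω} := by
    filter_upwards [hpsd] with ω hω
    intro hmem
    by_contra hlt
    have hlt' : f ω < c := lt_of_not_ge hlt
    have htr : (V⁻¹ * M ω).trace ≤ c := by rw [← hfeq ω]; exact hlt'.le
    exact hmem (psdm_key hV hω htr)
  refine (measure_mono_ae hsub).trans ?_
  have hne : μ {ω | c ≤ f ω} ≠ ⊤ := measure_ne_top μ _
  have htoReal : (μ {ω | c ≤ f ω}).toReal ≤ δ := by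
    have : c * (μ {ω | c ≤ f ω}).toReal ≤ (d : ℝ) := hmarkov.trans hEf
    have hcd : (d : ℝ) / c = δ := by
      rw [hc, div_div_eq_mul_div, mul_comm, mul_div_assoc, div_self hd0.ne', mul_one]
    calc (μ {ω | c ≤ f ω}).toReal ≤ (d : ℝ) / c := by
          rw [le_div_iff₀ hc0]; linarith [this]
      _ = δ := hcd
  calc μ {ω | c ≤ f ω} = ENNReal.ofReal (μ {ω | c ≤ f ω}).toReal :=
        (ENNReal.ofReal_toReal hne).symm
    _ ≤ ENNReal.ofReal δ := ENNReal.ofReal_le_ofReal htoReal
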